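/- Let n ≥ 1 and let k_1, …, k_n be natural numbers with k_1 + ⋯ + k_n ≤ n − 1. Then there exists a rooted forest on the vertex set {1, …, n} in which vertex i has exactly k_i children for every i; concretely, there exists a parent function p : {1,…,n} → {1,…,n} ∪ {root} such that the relation 'j is a child of i' (i.e. p(j) = i) is acyclic (equivalently, the ancestor relation generated by p is well-founded), and for every i the number of j with p(j) = i equals k_i. Moreover, if k_1 + ⋯ + k_n = n − 1, then any such forest is a tree: exactly one vertex j satisfies p(j) = root. -/
import Mathlib

lemma forest_aux : ∀ (t n : ℕ) (k : Fin n → ℕ) (s : Finset (Fin n)),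
    ∑ i ∈ s, k i = t → (t < s.card ∨ t = 0) →
    ∃ (p : Fin n → Option (Fin n)) (r : Fin n → ℕ),
      (∀ j, j ∉ s → p j = none) ∧
      (∀ j i, p j = some i → i ∈ s) ∧
      (∀ i ∈ s, (Finset.univ.filter fun j => p j = some i).card = k i) ∧
      (∀ i j, p j = some i → r i < r j) := by
  intro t
  induction t with
  | zero =>
    intro n k s hsum _
    refine ⟨fun _ => none, fun _ => 0, fun _ _ => rfl, by simp, ?_, by simp⟩
    intro i hi
    have hk : k i = 0 := Finset.sum_eq_zero_iff.mp hsum i hi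
    simp [hk]
  | succ t ih =>
    intro n k s hsum hlt
    have hcard : t + 1 < s.card := hlt.resolve_right (by omega)
    have hj0 : ∃ j ∈ s, k j = 0 := by
      by_contra h
      push_neg at h
      have : s.card ≤ ∑ i ∈ s, k i := by
        calc s.card = ∑ _i ∈ s, 1 := by simp
        _ ≤ ∑ i ∈ s, k i :=
          Finset.sum_le_sum (fun i hi => Nat.one_le_iff_ne_zero.mpr (h i hi))
      omega
    obtain ⟨j0, hj0s, hj0k⟩ := hj0
    have hi0 : ∃ i ∈ s, k i ≠ 0 := by
      by_contra h
      push_neg at h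
      have : ∑ i ∈ s, k i = 0 := Finset.sum_eq_zero h
      omega
    obtain ⟨i0, hi0s, hi0k⟩ := hi0
    have hne : i0 ≠ j0 := fun h => hi0k (h ▸ hj0k)
    set s' := s.erase j0 with hs'
    set k' := Function.update k i0 (k i0 - 1) with hk'
    have hi0s' : i0 ∈ s' := Finset.mem_erase.mpr ⟨hne, hi0s⟩
    have hcard' : s'.card = s.card - 1 := Finset.card_erase_of_mem hj0s
    have h1 : ∑ i ∈ s', k i = t + 1 := by
      rw [Finset.sum_erase s hj0k]; exact hsum
    have hsum' : ∑ i ∈ s', k' i = t := by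
      have h2 : ∑ i ∈ s', k' i = (k i0 - 1) + ∑ i ∈ s' \ {i0}, k i :=
        Finset.sum_update_of_mem hi0s' k (k i0 - 1)
      have h3 : k i0 + ∑ i ∈ s'.erase i0, k i = ∑ i ∈ s', k i :=
        Finset.add_sum_erase s' k hi0s'
      rw [← Finset.erase_eq] at h2
      omega
    obtain ⟨p', r', hp'none, hp'mem, hp'fib, hp'rank⟩ :=
      ih n k' s' hsum' (by
        rcases Nat.eq_zero_or_pos t with h | h
        · exact Or.inr h
        · left; omega)
    have hp'j0 : p' j0 = none := hp'none j0 (Finset.notMem_erase j0 s)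
    refine ⟨Function.update p' j0 (some i0), Function.update r' j0 (r' i0 + 1),
      ?_, ?_, ?_, ?_⟩
    · intro j hj
      have hjne : j ≠ j0 := fun h => hj (h ▸ hj0s)
      rw [Function.update_of_ne hjne]
      exact hp'none j (fun h => hj (Finset.mem_of_mem_erase h))
    · intro j i hpj
      by_cases hj : j = j0
      · subst hj
        rw [Function.update_self] at hpj
        exact (Option.some_inj.mp hpj) ▸ hi0s
      · rw [Function.update_of_ne hj] at hpj
        exact Finset.mem_of_mem_erase (hp'mem j i hpj)
    · intro i hi
      by_cases hii0 : i = i0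
      · subst hii0
        have hset : (Finset.univ.filter fun j => Function.update p' j0 (some i) j = some i)
            = insert j0 (Finset.univ.filter fun j => p' j = some i) := by
          ext j
          by_cases h : j = j0
          · subst h; simp [hp'j0]
          · simp [h, Function.update_of_ne h]
        rw [hset, Finset.card_insert_of_notMem (by simp [hp'j0])]
        have := hp'fib i hi0s'
        rw [hk', Function.update_self] at this
        omega
      · have hset : (Finset.univ.filter fun j => Function.update p' j0 (some i0) j = some i)
            = (Finset.univ.filter fun j => p' j = some i) := by
          ext j
          by_cases h : j = j0
          · subst h; simp [hp'j0, Function.update_self, hii0, Ne.symm hii0]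
          · simp [Function.update_of_ne h]
        rw [hset]
        by_cases hij0 : i = j0
        · subst hij0
          have hempty : (Finset.univ.filter fun j => p' j = some i) = ∅ := by
            rw [Finset.filter_eq_empty_iff]
            intro j _ hpj
            exact absurd (hp'mem j i hpj) (Finset.notMem_erase i s)
          rw [hempty, hj0k]
          rfl
        · have := hp'fib i (Finset.mem_erase.mpr ⟨hij0, hi⟩)
          rw [hk', Function.update_of_ne hii0] at this
          exact this
    · intro i j hpj
      have hine : i ≠ j0 := by
        by_cases hj : j = j0
        · subst hj
          rw [Function.update_self] at hpj
          exact (Option.some_inj.mp hpj) ▸ hne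
        · rw [Function.update_of_ne hj] at hpj
          exact (Finset.mem_erase.mp (hp'mem j i hpj)).1
      rw [Function.update_of_ne hine]
      by_cases hj : j = j0
      · subst hj
        rw [Function.update_self] at hpj ⊢
        have hii : i0 = i := Option.some_inj.mp hpj
        rw [← hii]
        omega
      · rw [Function.update_of_ne hj] at hpj ⊢
        exact hp'rank i j hpj

/-- If `k_1 + ⋯ + k_n ≤ n - 1`, there is a rooted forest on `{1,…,n}`
in which vertex `i` has exactly `k_i` children (given by an acyclic parent
function); moreover, if `k_1 + ⋯ + k_n = n - 1`, any such forest is a tree,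
i.e. has exactly one root. -/
theorem forest_with_prescribed_fertilities (n : ℕ) (hn : 1 ≤ n)
    (k : Fin n → ℕ) (hk : ∑ i, k i ≤ n - 1) :
    (∃ p : Fin n → Option (Fin n),
      WellFounded (fun i j : Fin n => p j = some i) ∧
      ∀ i : Fin n, (Finset.univ.filter fun j => p j = some i).card = k i) ∧
    (∑ i, k i = n - 1 →
      ∀ p : Fin n → Option (Fin n),
        WellFounded (fun i j : Fin n => p j = some i) →
        (∀ i : Fin n, (Finset.univ.filter fun j => p j = some i).card = k i) →
        (Finset.univ.filter fun j => p j = none).card = 1) := by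
  constructor
  · obtain ⟨p, r, _, _, hfib, hrank⟩ :=
      forest_aux (∑ i, k i) n k Finset.univ rfl (by
        left
        rw [Finset.card_univ, Fintype.card_fin]
        omega)
    refine ⟨p, ?_, fun i => hfib i (Finset.mem_univ i)⟩
    exact Subrelation.wf (fun {i j} h => hrank i j h) (InvImage.wf r Nat.lt_wfRel.wf)
  · intro hsum p _ hfib
    have htot : (Finset.univ : Finset (Fin n)).card
        = ∑ b : Option (Fin n), (Finset.univ.filter fun j => p j = b).card :=
      Finset.card_eq_sum_card_fiberwise (fun x _ => Finset.mem_univ (p x))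
    rw [Fintype.sum_option] at htot
    simp only [hfib] at htot
    rw [Finset.card_univ, Fintype.card_fin, hsum] at htot
    omega
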